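/- Let $p$ be a prime and $f(T) = \sum_{n \geq 0} \frac{a_n}{n+1} T^{n+1}$ a power series with all $a_n$ in the ring of integers of an algebraic closure of $\mathbb{Q}_p$, with $v(a_0) = \alpha < \infty$ (valuation normalized so $v(p) = 1$). Then any nonzero root of $f$ in the closed unit disk has valuation at most $\alpha + \log(2)/\log(p)$. -/

import Mathlib

open IsUltrametricDist

private lemma aux_norm_natCast_ge
    (p : ℕ) (hp : p.Prime)
    (K : Type*) [NormedField K] [IsUltrametricDist K] [CharZero K]
    (hpnorm : ‖(p : K)‖ = (p : ℝ)⁻¹)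
    (n : ℕ) (hn : n ≠ 0) : ((n : ℝ))⁻¹ ≤ ‖(n : K)‖ := by
  have hp1 : (1:ℝ) < p := by exact_mod_cast hp.one_lt
  set k := n.factorization p with hk
  set m := n / p ^ k with hmdef
  have hm : p ^ k * m = n := Nat.ordProj_mul_ordCompl_eq_self n p
  have hpm : ¬ p ∣ m := Nat.not_dvd_ordCompl hp hn
  have hcop : Nat.Coprime m p := (hp.coprime_iff_not_dvd.mpr hpm).symm
  have hm1 : ‖(m : K)‖ = 1 := by
    obtain ⟨u, v, huv⟩ := hcop.isCoprime
    have hcast : (u : K) * (m : K) + (v : K) * (p : K) = 1 := by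
      have := congrArg (fun z : ℤ => (z : K)) huv
      push_cast at this
      simpa using this
    have h2 : ‖(v : K) * (p : K)‖ < 1 := by
      rw [norm_mul, hpnorm]
      calc ‖((v : ℤ) : K)‖ * (p:ℝ)⁻¹ ≤ 1 * (p:ℝ)⁻¹ := by
            gcongr; exact norm_intCast_le_one K v
        _ < 1 := by rw [one_mul]; exact inv_lt_one_of_one_lt₀ hp1
    have h3 : (1:ℝ) ≤ max ‖(u : K) * (m : K)‖ ‖(v : K) * (p : K)‖ := by
      calc (1:ℝ) = ‖(1 : K)‖ := (norm_one).symm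
        _ = ‖(u : K) * (m : K) + (v : K) * (p : K)‖ := by rw [hcast]
        _ ≤ _ := norm_add_le_max _ _
    have h4 : (1:ℝ) ≤ ‖(u : K) * (m : K)‖ := by
      rcases max_cases ‖(u : K) * (m : K)‖ ‖(v : K) * (p : K)‖ with ⟨he, _⟩ | ⟨he, _⟩ <;>
        rw [he] at h3
      · exact h3
      · linarith
    have h5 : (1:ℝ) ≤ ‖(m : K)‖ := by
      rw [norm_mul] at h4
      calc (1:ℝ) ≤ ‖((u : ℤ) : K)‖ * ‖(m : K)‖ := h4
        _ ≤ 1 * ‖(m : K)‖ := by gcongr; exact norm_intCast_le_one K u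
        _ = ‖(m : K)‖ := one_mul _
    exact le_antisymm (norm_natCast_le_one K m) h5
  have hnk : ‖(n : K)‖ = ((p:ℝ) ^ k)⁻¹ := by
    rw [← hm]
    push_cast
    rw [norm_mul, norm_pow, hpnorm, hm1, mul_one, inv_pow]
  rw [hnk]
  have hmpos : 0 < m := Nat.pos_of_ne_zero (by
    intro h; rw [h, mul_zero] at hm; exact hn hm.symm)
  have hle : (p : ℝ) ^ k ≤ (n : ℝ) := by
    exact_mod_cast calc p ^ k ≤ p ^ k * m := Nat.le_mul_of_pos_right _ hmpos
      _ = n := hm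
  exact inv_anti₀ (by positivity) hle

private lemma aux_hasSum_norm_le {K : Type*} [NormedField K] [IsUltrametricDist K]
    {f : ℕ → K} {s : K} {c : ℝ} (hc : 0 ≤ c) (h : HasSum f s)
    (hf : ∀ n, ‖f n‖ ≤ c) : ‖s‖ ≤ c := by
  refine le_of_tendsto h.norm (Filter.Eventually.of_forall fun t => ?_)
  exact norm_sum_le_of_forall_le_of_nonneg hc fun i _ => hf i

theorem newton_polygon_smallest_root_bound
    (p : ℕ) (hp : p.Prime)
    (K : Type*) [NormedField K] [IsUltrametricDist K] [CharZero K]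
    (hpnorm : ‖(p : K)‖ = (p : ℝ)⁻¹)
    (a : ℕ → K) (hint : ∀ n, ‖a n‖ ≤ 1)
    (α : ℝ) (hα : ‖a 0‖ = (p : ℝ) ^ (-α))
    (x : K) (hx0 : x ≠ 0) (hx1 : ‖x‖ ≤ 1)
    (hroot : HasSum (fun n : ℕ => a n / ((n : K) + 1) * x ^ (n + 1)) 0) :
    -Real.logb p ‖x‖ ≤ α + Real.log 2 / Real.log p := by
  have hp1 : (1:ℝ) < p := by exact_mod_cast hp.one_lt
  have hx0' : (0:ℝ) < ‖x‖ := norm_pos_iff.mpr hx0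
  have ha0 : (0:ℝ) < ‖a 0‖ := by rw [hα]; positivity
  have key : ‖a 0‖ ≤ 2 * ‖x‖ := by
    by_contra hlt
    push_neg at hlt
    have hxhalf : ‖x‖ < 1/2 := by have := hint 0; linarith
    set F : ℕ → K := fun n : ℕ => a n / ((n : K) + 1) * x ^ (n + 1) with hF
    have hF0 : F 0 = a 0 * x := by simp [hF]
    have htail : HasSum (fun n => F (n + 1)) (0 - ∑ i ∈ Finset.range 1, F i) :=
      (hasSum_nat_add_iff' 1).mpr hroot
    have hterm : ∀ n : ℕ, ‖F (n + 1)‖ ≤ 2 * ‖x‖ ^ 2 := by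
      intro n
      have hd : ((n:ℝ) + 2)⁻¹ ≤ ‖((n : K) + 1) + 1‖ := by
        have h := aux_norm_natCast_ge p hp K hpnorm (n + 2) (by omega)
        push_cast at h
        convert h using 2 <;> ring
      have hdpos : (0:ℝ) < ‖((n : K) + 1) + 1‖ :=
        lt_of_lt_of_le (by positivity) hd
      have heq : ‖F (n+1)‖ = ‖a (n+1)‖ / ‖((n : K) + 1) + 1‖ * ‖x‖ ^ (n + 2) := by
        rw [hF]
        simp only [norm_mul, norm_div, norm_pow]
        push_cast
        ring
      have hnum : ‖a (n+1)‖ / ‖((n : K) + 1) + 1‖ ≤ (n:ℝ) + 2 := by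
        rw [div_le_iff₀ hdpos]
        have h1le : (1:ℝ) ≤ ((n:ℝ) + 2) * ‖((n : K) + 1) + 1‖ := by
          have h := mul_le_mul_of_nonneg_left hd (by positivity : (0:ℝ) ≤ (n:ℝ) + 2)
          rwa [mul_inv_cancel₀ (by positivity : ((n:ℝ) + 2) ≠ 0)] at h
        exact (hint (n+1)).trans h1le
      have hxpow : ‖x‖ ^ (n + 2) ≤ (1/2:ℝ) ^ n * ‖x‖ ^ 2 := by
        have h : ‖x‖ ^ (n+2) = ‖x‖ ^ n * ‖x‖ ^ 2 := by ring
        rw [h]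
        have h2 : ‖x‖ ^ n ≤ (1/2:ℝ) ^ n :=
          pow_le_pow_left₀ (norm_nonneg x) hxhalf.le n
        exact mul_le_mul_of_nonneg_right h2 (by positivity)
      have hgeo : ((n:ℝ) + 2) * (1/2:ℝ) ^ n ≤ 2 := by
        have hn2 : ((n:ℝ) + 2) ≤ 2 * 2 ^ n := by
          have h : n + 2 ≤ 2 * 2 ^ n := by
            calc n + 2 ≤ 2 ^ (n + 1) := Nat.lt_two_pow_self (n := n+1)
              _ = 2 ^ n * 2 := pow_succ 2 n
              _ = 2 * 2 ^ n := by ring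
          exact_mod_cast h
        rw [div_pow, one_pow, mul_one_div, div_le_iff₀ (by positivity : (0:ℝ) < 2 ^ n)]
        linarith
      calc ‖F (n+1)‖ = ‖a (n+1)‖ / ‖((n : K) + 1) + 1‖ * ‖x‖ ^ (n + 2) := heq
        _ ≤ ((n:ℝ) + 2) * ((1/2:ℝ) ^ n * ‖x‖ ^ 2) := by
            apply mul_le_mul hnum hxpow (by positivity) (by positivity)
        _ = (((n:ℝ) + 2) * (1/2:ℝ) ^ n) * ‖x‖ ^ 2 := by ring
        _ ≤ 2 * ‖x‖ ^ 2 := by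
            exact mul_le_mul_of_nonneg_right hgeo (by positivity)
    have hsum_le : ‖(0 : K) - ∑ i ∈ Finset.range 1, F i‖ ≤ 2 * ‖x‖ ^ 2 :=
      aux_hasSum_norm_le (by positivity) htail hterm
    have hF0norm : ‖(0 : K) - ∑ i ∈ Finset.range 1, F i‖ = ‖a 0‖ * ‖x‖ := by
      rw [Finset.sum_range_one, hF0, zero_sub, norm_neg, norm_mul]
    rw [hF0norm] at hsum_le
    have hcontr : ‖a 0‖ * ‖x‖ < ‖a 0‖ * ‖x‖ := by
      calc ‖a 0‖ * ‖x‖ ≤ 2 * ‖x‖ ^ 2 := hsum_le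
        _ = (2 * ‖x‖) * ‖x‖ := by ring
        _ < ‖a 0‖ * ‖x‖ := by gcongr
    exact lt_irrefl _ hcontr
  have hxge : (p : ℝ) ^ (-α) / 2 ≤ ‖x‖ := by rw [← hα]; linarith
  have h6 : Real.logb p ((p:ℝ) ^ (-α) / 2) ≤ Real.logb p ‖x‖ :=
    Real.logb_le_logb_of_le hp1 (by positivity) hxge
  have h7 : Real.logb p ((p:ℝ) ^ (-α) / 2) = -α - Real.log 2 / Real.log p := by
    rw [Real.logb_div (by positivity) (by norm_num),
      Real.logb_rpow (by positivity) (by exact_mod_cast hp.one_lt.ne')]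
    congr 1
  linarith
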